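/- arXiv:math/0206224 — 3 statements merged into one kernel-verified Lean document; each statement's English description precedes it below -/
import Mathlib

section
/- Let r ∈ L²(ℝ) ∩ L^∞(ℝ) with ‖r‖_∞ ≤ ρ < 1, z₀ ∈ ℝ, and define δ(z) = exp((1/(2πi)) ∫_{−∞}^{z₀} log(1−|r(s)|²)/(s−z) ds) for z ∉ (−∞, z₀]. Then (1−ρ²)^{1/2} ≤ |δ(z)| ≤ (1−ρ²)^{−1/2} for all such z. -/
open MeasureTheory Real

/-- Let `r ∈ L²(ℝ) ∩ L^∞(ℝ)` with `‖r‖_∞ ≤ ρ < 1`, `z₀ ∈ ℝ`, and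
`δ(z) = exp((1/(2πi)) ∫_{−∞}^{z₀} log(1−|r(s)|²)/(s−z) ds)` for `z ∉ (−∞, z₀]`.
Then `(1−ρ²)^{1/2} ≤ |δ(z)| ≤ (1−ρ²)^{−1/2}`. -/
theorem stmt_9 (r : ℝ → ℂ) (ρ z₀ : ℝ) (hmeas : Measurable r)
    (hL2 : MemLp r 2 (volume : Measure ℝ))
    (hρ : ∀ s, ‖r s‖ ≤ ρ) (hρ1 : ρ < 1)
    (δ : ℂ → ℂ)
    (hδ : ∀ w : ℂ, δ w =
      Complex.exp ((1 / (2 * (π : ℂ) * Complex.I)) *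
        ∫ s in Set.Iio z₀, ((Real.log (1 - ‖r s‖ ^ 2) : ℂ)) / ((s : ℂ) - w))) :
    ∀ z : ℂ, z ∉ (fun x : ℝ => (x : ℂ)) '' Set.Iic z₀ →
      Real.sqrt (1 - ρ ^ 2) ≤ ‖δ z‖ ∧
        ‖δ z‖ ≤ (Real.sqrt (1 - ρ ^ 2))⁻¹ := by
  intro z hz
  have hρ0 : 0 ≤ ρ := le_trans (norm_nonneg _) (hρ 0)
  have h1ρ : 0 < 1 - ρ ^ 2 := by nlinarith
  set L : ℝ → ℝ := fun s => Real.log (1 - ‖r s‖ ^ 2) with hLdef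
  set x := z.re with hx
  set y := z.im with hy
  set M : ℝ := -Real.log (1 - ρ ^ 2) with hMdef
  have hrs : ∀ s, ‖r s‖ ^ 2 ≤ ρ ^ 2 := fun s => by nlinarith [hρ s, norm_nonneg (r s)]
  have h1s : ∀ s, 0 < 1 - ‖r s‖ ^ 2 := fun s => by nlinarith [hrs s]
  have hLle0 : ∀ s, L s ≤ 0 := fun s =>
    Real.log_nonpos (by nlinarith [h1s s]) (by nlinarith [sq_nonneg ‖r s‖])
  have hLge : ∀ s, Real.log (1 - ρ ^ 2) ≤ L s := fun s =>
    (Real.log_le_log_iff h1ρ (h1s s)).mpr (by nlinarith [hrs s])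
  have hM0 : 0 ≤ M := by
    rw [hMdef]
    have := Real.log_nonpos (le_of_lt h1ρ) (by nlinarith)
    linarith
  have hLabsM : ∀ s, |L s| ≤ M := fun s => abs_le.mpr ⟨by linarith [hLge s], by linarith [hLle0 s, hM0]⟩
  -- L is dominated by ‖r s‖² / (1-ρ²)
  have hLkey : ∀ s, |L s| ≤ ‖r s‖ ^ 2 * (1 - ρ ^ 2)⁻¹ := by
    intro s
    set t := ‖r s‖ ^ 2 with htdef
    have ht0 : (0:ℝ) ≤ t := sq_nonneg _
    have h1 : 0 < 1 - t := h1s s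
    have hlog : Real.log ((1 - t)⁻¹) ≤ (1 - t)⁻¹ - 1 :=
      Real.log_le_sub_one_of_pos (inv_pos.mpr h1)
    rw [Real.log_inv] at hlog
    have habs : |L s| = -L s := abs_of_nonpos (hLle0 s)
    have h2 : (1 - t)⁻¹ - 1 = t * (1 - t)⁻¹ := by field_simp; ring
    have h3 : t * (1 - t)⁻¹ ≤ t * (1 - ρ ^ 2)⁻¹ := by
      have hinv : (1 - t)⁻¹ ≤ (1 - ρ ^ 2)⁻¹ := by
        apply inv_anti₀ h1ρ
        nlinarith [hrs s]
      exact mul_le_mul_of_nonneg_left hinv ht0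
    rw [habs]
    calc -L s ≤ (1 - t)⁻¹ - 1 := hlog
    _ = t * (1 - t)⁻¹ := h2
    _ ≤ t * (1 - ρ ^ 2)⁻¹ := h3
  have hLmeas : Measurable L :=
    Real.measurable_log.comp (measurable_const.sub (hmeas.norm.pow_const 2))
  -- distance lower bound
  set ε : ℝ := max |y| (x - z₀) with hεdef
  have hε : 0 < ε := by
    rcases eq_or_ne y 0 with hy0 | hy0
    · have hxz : z₀ < x := by
        by_contra h
        push_neg at h
        exact hz ⟨x, h, by apply Complex.ext <;> simp [hx, hy0.symm, hy]⟩
      exact lt_max_of_lt_right (by linarith)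
    · exact lt_max_of_lt_left (abs_pos.mpr hy0)
  have hdist : ∀ s ∈ Set.Iio z₀, ε ≤ ‖(s : ℂ) - z‖ := by
    intro s hs
    apply max_le
    · have := Complex.abs_im_le_norm ((s : ℂ) - z)
      simpa [hy] using this
    · have h1 : x - z₀ ≤ x - s := by simp at hs; linarith
      have h2 : x - s ≤ |((s : ℂ) - z).re| := by
        simp only [Complex.sub_re, Complex.ofReal_re, ← hx]
        rw [abs_sub_comm]
        exact le_abs_self _
      exact le_trans h1 (h2.trans (Complex.abs_re_le_norm _))
  set f : ℝ → ℂ := fun s => ((L s : ℝ) : ℂ) / ((s : ℂ) - z) with hfdef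
  have hfmeas : Measurable f :=
    (Complex.measurable_ofReal.comp hLmeas).div
      ((Complex.measurable_ofReal.comp measurable_id).sub measurable_const)
  have hr2int : Integrable (fun s => ‖r s‖ ^ 2) (volume : Measure ℝ) := hL2.norm.integrable_sq
  have hf_int : IntegrableOn f (Set.Iio z₀) volume := by
    apply Integrable.mono' ((hr2int.mul_const ((1 - ρ ^ 2)⁻¹ * ε⁻¹)).integrableOn)
      hfmeas.aestronglyMeasurable
    rw [ae_restrict_iff' measurableSet_Iio]
    filter_upwards with s hs
    have hA := hdist s hs
    have hnorm : ‖f s‖ = |L s| / ‖(s : ℂ) - z‖ := by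
      simp [hfdef]
    rw [hnorm]
    calc |L s| / ‖(s : ℂ) - z‖ ≤ |L s| / ε :=
          div_le_div_of_nonneg_left (abs_nonneg _) hε hA
    _ = |L s| * ε⁻¹ := div_eq_mul_inv _ _
    _ ≤ (‖r s‖ ^ 2 * (1 - ρ ^ 2)⁻¹) * ε⁻¹ :=
          mul_le_mul_of_nonneg_right (hLkey s) (inv_nonneg.mpr (le_of_lt hε))
    _ = ‖r s‖ ^ 2 * ((1 - ρ ^ 2)⁻¹ * ε⁻¹) := by ring
  -- the Cauchy kernel
  set K : ℝ → ℝ := fun s => |y| * ((s - x) ^ 2 + y ^ 2)⁻¹ with hKdef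
  have hK_nonneg : ∀ s, 0 ≤ K s := fun s =>
    mul_nonneg (abs_nonneg _) (inv_nonneg.mpr (by positivity))
  have hKrw : y ≠ 0 → K = fun s => |y|⁻¹ * (fun t : ℝ => (1 + t ^ 2)⁻¹) ((s - x) / y) := by
    intro hy0
    funext s
    have hy2 : y ^ 2 ≠ 0 := pow_ne_zero _ hy0
    have h1 : 1 + ((s - x) / y) ^ 2 = ((s - x) ^ 2 + y ^ 2) / y ^ 2 := by field_simp; ring
    have key : ∀ A : ℝ, |y| * A⁻¹ = |y|⁻¹ * (A / y ^ 2)⁻¹ := by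
      intro A
      rw [inv_div, div_eq_mul_inv, ← mul_assoc, ← sq_abs y, pow_two, ← mul_assoc,
        inv_mul_cancel₀ (abs_ne_zero.mpr hy0), one_mul]
    simp only [hKdef, h1]
    exact key _
  have hK_int : Integrable K (volume : Measure ℝ) := by
    rcases eq_or_ne y 0 with hy0 | hy0
    · have : K = fun _ => (0:ℝ) := by funext s; simp [hKdef, hy0]
      rw [this]; exact integrable_zero _ _ _
    · rw [hKrw hy0]
      exact ((integrable_inv_one_add_sq.comp_div hy0).comp_sub_right x).const_mul _
  have hK_val : ∫ s, K s ≤ π := by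
    rcases eq_or_ne y 0 with hy0 | hy0
    · have : K = fun _ => (0:ℝ) := by funext s; simp [hKdef, hy0]
      rw [this]
      simp [Real.pi_pos.le]
    · rw [hKrw hy0, integral_const_mul]
      have h2 : (∫ s : ℝ, (fun u : ℝ => (1 + (u / y) ^ 2)⁻¹) (s - x))
          = ∫ s : ℝ, (1 + (s / y) ^ 2)⁻¹ :=
        integral_sub_right_eq_self (fun u : ℝ => (1 + (u / y) ^ 2)⁻¹) x
      have h3 : (∫ s : ℝ, (1 + (s / y) ^ 2)⁻¹) = |y| • ∫ t : ℝ, (1 + t ^ 2)⁻¹ :=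
        Measure.integral_comp_div (fun t : ℝ => (1 + t ^ 2)⁻¹) y
      rw [show (fun s : ℝ => (fun t : ℝ => (1 + t ^ 2)⁻¹) ((s - x) / y))
            = (fun s : ℝ => (fun u : ℝ => (1 + (u / y) ^ 2)⁻¹) (s - x)) from rfl,
        h2, h3, integral_univ_inv_one_add_sq]
      rw [smul_eq_mul, ← mul_assoc, inv_mul_cancel₀ (abs_ne_zero.mpr hy0), one_mul]
  -- imaginary part of f
  have him : ∀ s, |(f s).im| ≤ M * K s := by
    intro s
    have hN : (0:ℝ) ≤ (s - x) ^ 2 + y ^ 2 := by positivity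
    have h1 : (f s).im = L s * (y * ((s - x) ^ 2 + y ^ 2)⁻¹) := by
      simp only [hfdef, Complex.div_im, Complex.ofReal_re, Complex.ofReal_im, Complex.sub_re,
        Complex.sub_im, Complex.ofReal_re, Complex.ofReal_im, Complex.normSq_apply, ← hx, ← hy]
      field_simp
      ring
    rw [h1, hKdef]
    calc |L s * (y * ((s - x) ^ 2 + y ^ 2)⁻¹)|
        = |L s| * (|y| * ((s - x) ^ 2 + y ^ 2)⁻¹) := by
          rw [abs_mul, abs_mul, abs_inv, abs_of_nonneg hN]
    _ ≤ M * (|y| * ((s - x) ^ 2 + y ^ 2)⁻¹) := by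
          apply mul_le_mul_of_nonneg_right (hLabsM s)
          exact mul_nonneg (abs_nonneg _) (inv_nonneg.mpr hN)
  -- bound the imaginary part of the integral
  have hwim : |(∫ s in Set.Iio z₀, f s).im| ≤ M * π := by
    have him_eq : (∫ s in Set.Iio z₀, f s).im = ∫ s in Set.Iio z₀, (f s).im := by
      have h := integral_im hf_int
      simpa only [RCLike.im_eq_complex_im] using h.symm
    rw [him_eq]
    calc |∫ s in Set.Iio z₀, (f s).im|
        ≤ ∫ s in Set.Iio z₀, |(f s).im| := by
          simpa using norm_integral_le_integral_norm (fun s => (f s).im) (μ := volume.restrict (Set.Iio z₀))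
    _ ≤ ∫ s in Set.Iio z₀, M * K s := by
          apply integral_mono hf_int.im.abs ((hK_int.const_mul M).integrableOn)
          intro s
          exact him s
    _ = M * ∫ s in Set.Iio z₀, K s := integral_const_mul M K
    _ ≤ M * ∫ s, K s := by
          apply mul_le_mul_of_nonneg_left _ hM0
          exact setIntegral_le_integral hK_int (Filter.Eventually.of_forall hK_nonneg)
    _ ≤ M * π := mul_le_mul_of_nonneg_left hK_val hM0
  -- real part of the exponent
  have hc : (1 / (2 * (π:ℂ) * Complex.I)) = ((-(2*π)⁻¹ : ℝ) : ℂ) * Complex.I := by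
    have hne : (2 * (π:ℂ) * Complex.I) ≠ 0 := by
      simp [Real.pi_ne_zero, Complex.I_ne_zero]
    have hπ : ((π:ℝ):ℂ) ≠ 0 := Complex.ofReal_ne_zero.mpr Real.pi_ne_zero
    rw [div_eq_iff hne]
    push_cast
    ring_nf
    rw [Complex.I_sq, mul_inv_cancel₀ hπ]
    norm_num
  have hEre : ((1 / (2 * (π:ℂ) * Complex.I)) * (∫ s in Set.Iio z₀, f s)).re
      = (2*π)⁻¹ * (∫ s in Set.Iio z₀, f s).im := by
    rw [hc]
    simp [Complex.mul_re, Complex.mul_im]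
  have h2π : (0:ℝ) < 2 * π := by positivity
  have hre_bound : |((1 / (2 * (π:ℂ) * Complex.I)) * (∫ s in Set.Iio z₀, f s)).re| ≤ M / 2 := by
    rw [hEre, abs_mul, abs_of_nonneg (inv_nonneg.mpr h2π.le)]
    calc (2*π)⁻¹ * |(∫ s in Set.Iio z₀, f s).im| ≤ (2*π)⁻¹ * (M * π) :=
          mul_le_mul_of_nonneg_left hwim (inv_nonneg.mpr h2π.le)
    _ = M / 2 := by field_simp
  have hsqrt : Real.sqrt (1 - ρ ^ 2) = Real.exp (-(M/2)) := by
    rw [Real.sqrt_eq_rpow, Real.rpow_def_of_pos h1ρ]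
    congr 1
    rw [hMdef]
    ring
  rw [hδ z, Complex.norm_exp]
  obtain ⟨hb1, hb2⟩ := abs_le.mp hre_bound
  constructor
  · rw [hsqrt]
    exact Real.exp_le_exp.mpr (by linarith)
  · rw [hsqrt, ← Real.exp_neg]
    exact Real.exp_le_exp.mpr (by linarith)
end

section
/- Let f : ℝ → ℂ be in H¹(ℝ) (f and f′ in L²) with f(0) = 0. Then ∫_{−∞}^0 |f(x)/x|² dx ≤ 4 ∫_{−∞}^0 |f′(x)|² dx (Hardy's inequality on the half-line applied to f − f(0)). -/
open MeasureTheory Set Filter Topology intervalIntegral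


private lemma holder2 {μ : Measure ℝ} [IsFiniteMeasure μ] {u v : ℝ → ℝ}
    (hu : MemLp u 2 μ) (hv : MemLp v 2 μ) (hu0 : 0 ≤ᵐ[μ] u) (hv0 : 0 ≤ᵐ[μ] v) :
    ∫ x, u x * v x ∂μ ≤ Real.sqrt (∫ x, u x ^ 2 ∂μ) * Real.sqrt (∫ x, v x ^ 2 ∂μ) := by
  have hconj : (2:ℝ).HolderConjugate 2 := Real.HolderConjugate.two_two
  have h := integral_mul_le_Lp_mul_Lq_of_nonneg hconj hu0 hv0
      (by simpa using hu) (by simpa using hv)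
  have h2 : ∀ w : ℝ → ℝ, ∫ x, w x ^ (2:ℝ) ∂μ = ∫ x, w x ^ 2 ∂μ := by
    intro w
    congr 1; funext x
    rw [show (2:ℝ) = ((2:ℕ):ℝ) by norm_num, Real.rpow_natCast]
  rw [h2, h2] at h
  refine h.trans (le_of_eq ?_)
  rw [Real.sqrt_eq_rpow, Real.sqrt_eq_rpow]

private lemma hardy_deriv (f f' : ℝ → ℂ) (hderiv : ∀ x : ℝ, HasDerivAt f (f' x) x)
    {t : ℝ} (ht : t ≠ 0) :
    HasDerivAt (fun y => -‖f y‖ ^ 2 / y)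
      (‖f t‖ ^ 2 / t ^ 2 - (2 * ((starRingEnd ℂ) (f t) * f' t).re) / t) t := by
  have hre : HasDerivAt (fun y => (f y).re) ((f' t).re) t :=
    (Complex.reCLM.hasFDerivAt.comp_hasDerivAt t (hderiv t))
  have him : HasDerivAt (fun y => (f y).im) ((f' t).im) t :=
    (Complex.imCLM.hasFDerivAt.comp_hasDerivAt t (hderiv t))
  have hnsq : HasDerivAt (fun y => ‖f y‖ ^ 2)
      (2 * ((starRingEnd ℂ) (f t) * f' t).re) t := by
    have h1 : HasDerivAt (fun y => (f y).re * (f y).re + (f y).im * (f y).im) _ t :=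
      ((hre.mul hre).add (him.mul him))
    have heq : (fun y => (f y).re * (f y).re + (f y).im * (f y).im) = fun y => ‖f y‖ ^ 2 := by
      funext y
      rw [← Complex.normSq_apply, Complex.normSq_eq_norm_sq]
    rw [heq] at h1
    convert h1 using 1
    simp [Complex.mul_re, Complex.conj_re, Complex.conj_im]
    ring
  have h2 : HasDerivAt (fun y => -‖f y‖ ^ 2 * y⁻¹) _ t := (hnsq.neg.mul (hasDerivAt_inv ht))
  have heq2 : (fun y => -‖f y‖ ^ 2 * y⁻¹) = fun y => -‖f y‖ ^ 2 / y := by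
    funext y; rw [div_eq_mul_inv]
  rw [heq2] at h2
  convert h2 using 1
  simp only [Pi.neg_apply]
  field_simp
  ring

private lemma hardy_key (f f' : ℝ → ℂ)
    (hderiv : ∀ x : ℝ, HasDerivAt f (f' x) x)
    (hf' : MemLp f' 2 (volume : Measure ℝ))
    (h0 : f 0 = 0)
    (hf'2 : Integrable (fun x => ‖f' x‖ ^ 2) volume)
    {a b : ℝ} (hab : a ≤ b) (hb : b < 0) :
    ∫ x in Set.Ioc a b, ‖f x‖ ^ 2 / x ^ 2 ≤
      (∫ x in Set.Ioc b 0, ‖f' x‖ ^ 2)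
      + 2 * Real.sqrt (∫ x in Set.Ioc a b, ‖f x‖ ^ 2 / x ^ 2)
          * Real.sqrt (∫ x in Set.Iio 0, ‖f' x‖ ^ 2) := by
  have hfc : Continuous f := by
    exact continuous_iff_continuousAt.mpr fun x => (hderiv x).continuousAt
  have hIf' : ∀ u v : ℝ, IntervalIntegrable f' volume u v := fun u v =>
    ⟨(hf'.restrict _).integrable one_le_two, (hf'.restrict _).integrable one_le_two⟩
  set ε : ℝ := ∫ x in Set.Ioc b 0, ‖f' x‖ ^ 2 with hε
  have hεnn : 0 ≤ ε := setIntegral_nonneg measurableSet_Ioc (fun x _ => sq_nonneg _)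
  -- boundary estimate
  have hfb : ‖f b‖ ^ 2 ≤ ε * (-b) := by
    have hFTC0 : ∫ t in b..0, f' t = f 0 - f b :=
      integral_eq_sub_of_hasDerivAt (fun t _ => hderiv t) (hIf' b 0)
    have h1 : ‖f b‖ ≤ ∫ t in b..0, ‖f' t‖ := by
      calc ‖f b‖ = ‖∫ t in b..0, f' t‖ := by rw [hFTC0, h0, zero_sub, norm_neg]
      _ ≤ ∫ t in b..0, ‖f' t‖ := norm_integral_le_integral_norm hb.le
    have h2 : ∫ t in b..0, ‖f' t‖ ≤ Real.sqrt ε * Real.sqrt (-b) := by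
      rw [intervalIntegral.integral_of_le hb.le]
      have hh := holder2 (μ := volume.restrict (Set.Ioc b 0))
        (u := fun t => ‖f' t‖) (v := fun _ => (1:ℝ))
        (hf'.norm.restrict _) (memLp_const 1)
        (ae_of_all _ fun t => norm_nonneg _) (ae_of_all _ fun t => zero_le_one)
      simp only [mul_one, one_pow] at hh
      have hvol : ∫ (_ : ℝ) in Set.Ioc b 0, (1:ℝ) = -b := by
        rw [setIntegral_const, smul_eq_mul, mul_one,
            Real.volume_real_Ioc_of_le (by linarith : b ≤ 0)]
        ring
      rw [hvol] at hh
      exact hh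
    have h3 : ‖f b‖ ≤ Real.sqrt ε * Real.sqrt (-b) := h1.trans h2
    calc ‖f b‖ ^ 2 ≤ (Real.sqrt ε * Real.sqrt (-b)) ^ 2 :=
          pow_le_pow_left₀ (norm_nonneg _) h3 2
      _ = ε * (-b) := by
          rw [mul_pow, Real.sq_sqrt hεnn, Real.sq_sqrt (by linarith : (0:ℝ) ≤ -b)]
  have ha : a < 0 := lt_of_le_of_lt hab hb
  have hne : ∀ t ∈ Set.uIcc a b, t ≠ 0 := by
    intro t ht
    rw [Set.uIcc_of_le hab] at ht
    exact ne_of_lt (lt_of_le_of_lt ht.2 hb)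
  -- integrability of pieces
  have hcont1 : ContinuousOn (fun t => ‖f t‖ ^ 2 / t ^ 2) (Set.uIcc a b) :=
    ((hfc.norm.pow 2).continuousOn).div ((continuous_pow 2).continuousOn)
      (fun t ht => pow_ne_zero 2 (hne t ht))
  have hInt1 : IntervalIntegrable (fun t => ‖f t‖ ^ 2 / t ^ 2) volume a b :=
    hcont1.intervalIntegrable
  have hcontc : ContinuousOn (fun t : ℝ => (2:ℂ) * (starRingEnd ℂ) (f t) * ((t:ℂ))⁻¹)
      (Set.uIcc a b) := by
    apply ContinuousOn.mul
    · exact (continuous_const.mul ((Complex.continuous_conj).comp hfc)).continuousOn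
    · exact ContinuousOn.inv₀ (Complex.continuous_ofReal.continuousOn)
        (fun t ht => Complex.ofReal_ne_zero.2 (hne t ht))
  have hIntG : IntervalIntegrable (fun t => (2 * ((starRingEnd ℂ) (f t) * f' t).re) / t)
      volume a b := by
    have hmul : IntervalIntegrable
        (fun t : ℝ => ((2:ℂ) * (starRingEnd ℂ) (f t) * ((t:ℂ))⁻¹) * f' t) volume a b :=
      (hIf' a b).continuousOn_mul hcontc
    have hre : IntervalIntegrable
        (fun t : ℝ => (((2:ℂ) * (starRingEnd ℂ) (f t) * ((t:ℂ))⁻¹) * f' t).re) volume a b :=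
      ⟨hmul.1.re, hmul.2.re⟩
    have heq : (fun t : ℝ => (((2:ℂ) * (starRingEnd ℂ) (f t) * ((t:ℂ))⁻¹) * f' t).re)
        = fun t => (2 * ((starRingEnd ℂ) (f t) * f' t).re) / t := by
      funext t
      rw [← Complex.ofReal_inv]
      rw [show (2:ℂ) * (starRingEnd ℂ) (f t) * ((t⁻¹:ℝ):ℂ) * f' t
          = ((t⁻¹:ℝ):ℂ) * ((2:ℝ):ℂ) * ((starRingEnd ℂ) (f t) * f' t) by push_cast; ring]
      rw [mul_assoc, Complex.re_ofReal_mul, Complex.re_ofReal_mul]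
      rw [div_eq_mul_inv]
      ring
    rwa [heq] at hre
  -- FTC / integration by parts
  have hFTC : (∫ t in a..b, ‖f t‖ ^ 2 / t ^ 2) - ∫ t in a..b,
      (2 * ((starRingEnd ℂ) (f t) * f' t).re) / t
      = -‖f b‖ ^ 2 / b - -‖f a‖ ^ 2 / a := by
    rw [← intervalIntegral.integral_sub hInt1 hIntG]
    exact integral_eq_sub_of_hasDerivAt (fun t ht => hardy_deriv f f' hderiv (hne t ht))
      (hInt1.sub hIntG)
  set A : ℝ := ∫ x in Set.Ioc a b, ‖f x‖ ^ 2 / x ^ 2 with hA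
  have hAi : ∫ t in a..b, ‖f t‖ ^ 2 / t ^ 2 = A := intervalIntegral.integral_of_le hab
  set R : ℝ := ∫ x in Set.Iio 0, ‖f' x‖ ^ 2 with hR
  rw [hAi] at hFTC
  -- pointwise bound for the middle term
  have hcontw : ContinuousOn (fun t : ℝ => 2 * (‖f t‖ / |t|)) (Set.uIcc a b) :=
    ContinuousOn.mul continuous_const.continuousOn
      ((hfc.norm.continuousOn).div (continuous_abs.continuousOn)
        (fun t ht => abs_ne_zero.2 (hne t ht)))
  have hIntw : IntervalIntegrable (fun t => 2 * (‖f t‖ / |t|) * ‖f' t‖) volume a b :=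
    ((hIf' a b).norm).continuousOn_mul hcontw
  have hBle : (∫ t in a..b, (2 * ((starRingEnd ℂ) (f t) * f' t).re) / t)
      ≤ ∫ t in a..b, 2 * (‖f t‖ / |t|) * ‖f' t‖ := by
    apply intervalIntegral.integral_mono_on hab hIntG hIntw
    intro t ht
    have ht0 : t < 0 := lt_of_le_of_lt ht.2 hb
    have h1 : |((starRingEnd ℂ) (f t) * f' t).re| ≤ ‖f t‖ * ‖f' t‖ := by
      refine (Complex.abs_re_le_norm _).trans ?_
      rw [norm_mul, Complex.norm_conj]
    have habs : |2 * ((starRingEnd ℂ) (f t) * f' t).re / t|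
        ≤ 2 * (‖f t‖ / |t|) * ‖f' t‖ := by
      rw [abs_div, abs_mul, abs_two]
      have htpos : (0:ℝ) < |t| := abs_pos.2 (ne_of_lt ht0)
      rw [div_le_iff₀ htpos]
      calc 2 * |((starRingEnd ℂ) (f t) * f' t).re| ≤ 2 * (‖f t‖ * ‖f' t‖) := by linarith
        _ = 2 * (‖f t‖ / |t|) * ‖f' t‖ * |t| := by field_simp
    exact (le_abs_self _).trans habs
  -- Hölder on the product
  have hmeasu : AEStronglyMeasurable (fun t => ‖f t‖ / |t|)
      (volume.restrict (Set.Ioc a b)) :=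
    ((hfc.norm.measurable.div continuous_abs.measurable)).aestronglyMeasurable
  obtain ⟨C, hC⟩ := IsCompact.exists_bound_of_continuousOn isCompact_Icc
      ((hfc.norm.continuousOn).div continuous_abs.continuousOn
        (fun t ht => abs_ne_zero.2 (hne t (by rwa [Set.uIcc_of_le hab]))))
  have hu : MemLp (fun t => ‖f t‖ / |t|) 2 (volume.restrict (Set.Ioc a b)) :=
    MemLp.of_bound hmeasu C ((ae_restrict_iff' measurableSet_Ioc).2 (ae_of_all _
      fun t ht => hC t (Set.Ioc_subset_Icc_self ht)))
  have hholder := holder2 hu (hf'.norm.restrict _)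
      (ae_of_all _ fun t => div_nonneg (norm_nonneg _) (abs_nonneg _))
      (ae_of_all _ fun t => norm_nonneg _)
  have hu2 : ∫ t in Set.Ioc a b, (‖f t‖ / |t|) ^ 2 = A := by
    rw [hA]; congr 1; funext t; rw [div_pow, sq_abs]
  have hv2 : ∫ t in Set.Ioc a b, ‖f' t‖ ^ 2 ≤ R := by
    apply setIntegral_mono_set hf'2.integrableOn (ae_of_all _ fun t => sq_nonneg _)
    exact HasSubset.Subset.eventuallyLE (fun x hx => lt_of_le_of_lt hx.2 hb)
  have hvnn : 0 ≤ ∫ t in Set.Ioc a b, ‖f' t‖ ^ 2 :=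
    setIntegral_nonneg measurableSet_Ioc (fun x _ => sq_nonneg _)
  have hBw : ∫ t in a..b, 2 * (‖f t‖ / |t|) * ‖f' t‖
      = 2 * ∫ t in Set.Ioc a b, (‖f t‖ / |t|) * ‖f' t‖ := by
    rw [intervalIntegral.integral_of_le hab, ← MeasureTheory.integral_const_mul]
    congr 1; funext t; ring
  have hchain : ∫ t in a..b, 2 * (‖f t‖ / |t|) * ‖f' t‖
      ≤ 2 * Real.sqrt A * Real.sqrt R := by
    rw [hBw]
    have : ∫ t in Set.Ioc a b, (‖f t‖ / |t|) * ‖f' t‖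
        ≤ Real.sqrt A * Real.sqrt R := by
      refine hholder.trans ?_
      rw [hu2]
      exact mul_le_mul_of_nonneg_left (Real.sqrt_le_sqrt hv2) (Real.sqrt_nonneg _)
    linarith [this]
  have hfa : ‖f a‖ ^ 2 / a ≤ 0 :=
    div_nonpos_of_nonneg_of_nonpos (sq_nonneg _) ha.le
  have hbound : -‖f b‖ ^ 2 / b ≤ ε := by
    have hnb : (0:ℝ) < -b := by linarith
    rw [show -‖f b‖ ^ 2 / b = ‖f b‖ ^ 2 / (-b) by
      rw [div_neg, neg_div]]
    exact (div_le_iff₀ hnb).2 hfb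
  linarith [hFTC, hBle, hchain, neg_div a (‖f a‖ ^ 2), neg_div b (‖f b‖ ^ 2)]

/-- Hardy's inequality on the half-line: if `f : ℝ → ℂ` is in `H¹(ℝ)` (i.e. `f` is
differentiable with `f, f′ ∈ L²`) and `f 0 = 0`, then
`∫_{−∞}^0 |f(x)/x|² dx ≤ 4 ∫_{−∞}^0 |f′(x)|² dx`. -/
theorem stmt_13 (f f' : ℝ → ℂ)
    (hderiv : ∀ x : ℝ, HasDerivAt f (f' x) x)
    (hf : MemLp f 2 (volume : Measure ℝ))
    (hf' : MemLp f' 2 (volume : Measure ℝ))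
    (h0 : f 0 = 0) :
    ∫ x in Set.Iio (0 : ℝ), ‖f x / (x : ℂ)‖ ^ 2 ≤
      4 * ∫ x in Set.Iio (0 : ℝ), ‖f' x‖ ^ 2 := by
  have hnorm : ∀ x : ℝ, ‖f x / (x : ℂ)‖ ^ 2 = ‖f x‖ ^ 2 / x ^ 2 := by
    intro x
    rw [norm_div, div_pow, Complex.norm_real, Real.norm_eq_abs, sq_abs]
  simp only [hnorm]
  have hf'2 : Integrable (fun x => ‖f' x‖ ^ 2) volume := by
    have h := hf'.integrable_norm_rpow two_ne_zero ENNReal.ofNat_ne_top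
    have heq : (fun x => ‖f' x‖ ^ (2:ENNReal).toReal) = fun x => ‖f' x‖ ^ 2 := by
      funext x
      rw [ENNReal.toReal_ofNat, show (2:ℝ) = ((2:ℕ):ℝ) by norm_num, Real.rpow_natCast]
    rwa [heq] at h
  set R := ∫ x in Set.Iio (0:ℝ), ‖f' x‖ ^ 2 with hR
  have hRnn : 0 ≤ R := setIntegral_nonneg measurableSet_Iio fun x _ => sq_nonneg _
  by_cases Hc : IntegrableOn (fun x => ‖f x‖ ^ 2 / x ^ 2) (Set.Iio (0:ℝ)) volume
  swap
  · rw [MeasureTheory.integral_undef Hc]; linarith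
  set S := ∫ x in Set.Iio (0:ℝ), ‖f x‖ ^ 2 / x ^ 2 with hS
  have hSnn : 0 ≤ S :=
    setIntegral_nonneg measurableSet_Iio fun x _ => div_nonneg (sq_nonneg _) (sq_nonneg _)
  set s : ℕ → Set ℝ := fun n => Set.Ioo (-((n:ℝ)+2)) (-(1/((n:ℝ)+2))) with hs
  have hmono : Monotone s := by
    intro m n hmn
    have hmn' : (m:ℝ) ≤ n := Nat.cast_le.2 hmn
    apply Set.Ioo_subset_Ioo
    · linarith
    · have hm2 : (0:ℝ) < (m:ℝ) + 2 := by positivity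
      have h1 : (1:ℝ)/((n:ℝ)+2) ≤ 1/((m:ℝ)+2) := by
        apply one_div_le_one_div_of_le hm2
        linarith
      linarith
  have hunion : ⋃ n, s n = Set.Iio (0:ℝ) := by
    ext x
    simp only [hs, Set.mem_iUnion, Set.mem_Ioo, Set.mem_Iio]
    constructor
    · rintro ⟨n, _, h2⟩
      have : (0:ℝ) < 1/((n:ℝ)+2) := by positivity
      linarith
    · intro hx
      obtain ⟨n, hn⟩ := exists_nat_gt (max (-x) (1/(-x)))
      have hxp : (0:ℝ) < -x := by linarith
      have h1 : 1/(-x) < n := lt_of_le_of_lt (le_max_right _ _) hn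
      have h0' : -x < n := lt_of_le_of_lt (le_max_left _ _) hn
      refine ⟨n, by linarith, ?_⟩
      have hn2 : (0:ℝ) < (n:ℝ)+2 := by positivity
      rw [div_lt_iff₀ hxp] at h1
      have h3 : (1:ℝ) < ((n:ℝ)+2) * (-x) := by nlinarith
      have h4 : (1:ℝ)/((n:ℝ)+2) < -x := by
        rw [div_lt_iff₀ hn2]
        linarith [h3]
      linarith
  have htend : Tendsto (fun n => ∫ x in s n, ‖f x‖^2/x^2) atTop (𝓝 S) := by
    have h := tendsto_setIntegral_of_monotone (fun n => measurableSet_Ioo) hmono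
      (by rw [hunion]; exact Hc)
    rwa [hunion] at h
  set e : ℕ → ℝ := fun n => ∫ x in Set.Ioc (-(1/((n:ℝ)+2))) 0, ‖f' x‖ ^ 2 with he
  have hetend : Tendsto e atTop (𝓝 0) := by
    have hanti : Antitone (fun n : ℕ => Set.Ioc (-(1/((n:ℝ)+2))) (0:ℝ)) := by
      intro m n hmn
      have hmn' : (m:ℝ) ≤ n := Nat.cast_le.2 hmn
      apply Set.Ioc_subset_Ioc _ le_rfl
      have hm2 : (0:ℝ) < (m:ℝ) + 2 := by positivity
      have h1 : (1:ℝ)/((n:ℝ)+2) ≤ 1/((m:ℝ)+2) := by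
        apply one_div_le_one_div_of_le hm2
        linarith
      linarith
    have h2 := tendsto_setIntegral_of_antitone (fun n => measurableSet_Ioc) hanti
      ⟨0, hf'2.integrableOn⟩
    have hint : ⋂ n : ℕ, Set.Ioc (-(1/((n:ℝ)+2))) (0:ℝ) = {0} := by
      ext x
      simp only [Set.mem_iInter, Set.mem_Ioc, Set.mem_singleton_iff]
      constructor
      · intro h
        have hx0 : x ≤ 0 := (h 0).2
        by_contra hne
        have hx : x < 0 := lt_of_le_of_ne hx0 hne
        have hxp : (0:ℝ) < -x := by linarith
        obtain ⟨n, hn⟩ := exists_nat_gt (1/(-x))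
        have hn2 : (0:ℝ) < (n:ℝ)+2 := by positivity
        have h1 := (h n).1
        rw [div_lt_iff₀ hxp] at hn
        have h3 : (1:ℝ) < ((n:ℝ)+2) * (-x) := by nlinarith
        have h4 : (1:ℝ)/((n:ℝ)+2) < -x := by
          rw [div_lt_iff₀ hn2]; linarith
        linarith
      · rintro rfl n
        have : (0:ℝ) < 1/((n:ℝ)+2) := by positivity
        exact ⟨by linarith, le_rfl⟩
    rw [hint] at h2
    have hz : ∫ x in ({0}:Set ℝ), ‖f' x‖^2 = 0 := by
      rw [Measure.restrict_eq_zero.2 Real.volume_singleton, integral_zero_measure]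
    rwa [hz] at h2
  have hkey : ∀ n : ℕ, (∫ x in s n, ‖f x‖^2/x^2) ≤ e n + 2 * Real.sqrt S * Real.sqrt R := by
    intro n
    have hb : -(1/((n:ℝ)+2)) < 0 := by
      have : (0:ℝ) < 1/((n:ℝ)+2) := by positivity
      linarith
    have hab : -((n:ℝ)+2) ≤ -(1/((n:ℝ)+2)) := by
      have h1 : (1:ℝ)/((n:ℝ)+2) ≤ (n:ℝ)+2 := by
        rw [div_le_iff₀ (by positivity : (0:ℝ) < (n:ℝ)+2)]
        nlinarith [sq_nonneg ((n:ℝ)+1)]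
      linarith
    have hk := hardy_key f f' hderiv hf' h0 hf'2 hab hb
    rw [integral_Ioc_eq_integral_Ioo] at hk
    have hmonoI : ∫ x in s n, ‖f x‖^2/x^2 ≤ S := by
      apply setIntegral_mono_set Hc
        (ae_of_all _ fun x => div_nonneg (sq_nonneg _) (sq_nonneg _))
      refine HasSubset.Subset.eventuallyLE (fun x hx => ?_)
      exact lt_trans hx.2 hb
    refine hk.trans ?_
    have hsq : Real.sqrt (∫ x in s n, ‖f x‖^2/x^2) ≤ Real.sqrt S := Real.sqrt_le_sqrt hmonoI
    have hsR : (0:ℝ) ≤ Real.sqrt R := Real.sqrt_nonneg _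
    have := mul_le_mul_of_nonneg_right
      (mul_le_mul_of_nonneg_left hsq (by norm_num : (0:ℝ) ≤ 2)) hsR
    linarith [this]
  have hlim : S ≤ 0 + 2 * Real.sqrt S * Real.sqrt R :=
    le_of_tendsto_of_tendsto' htend (hetend.add tendsto_const_nhds) hkey
  rw [zero_add] at hlim
  nlinarith [Real.sq_sqrt hSnn, Real.sq_sqrt hRnn, Real.sqrt_nonneg S, Real.sqrt_nonneg R,
    hlim, sq_nonneg (Real.sqrt S - 2 * Real.sqrt R)]
end

section
/- Let g(z) = ((1−|r^#(z)|²)/(1−|r(z)|²))^{1/2} for z < 0, where r ∈ H¹(ℝ), ‖r‖_{H¹} ≤ λ, ‖r‖_∞ ≤ ρ < 1, and r^#(z) = r(0)/(1+iz). Then ‖g − 1‖_{L²((−∞,0])} ≤ λ/√(1−ρ). -/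
open MeasureTheory
lemma normsq_eq (z : ℂ) : ‖z‖^2 = z.re*z.re + z.im*z.im := by
  rw [← Complex.normSq_eq_norm_sq, Complex.normSq_apply]

lemma sobolev_zero (r r' : ℝ → ℂ)
    (hd : ∀ x, HasDerivAt r (r' x) x)
    (hr2 : MemLp r 2 (volume : Measure ℝ))
    (hr'2 : MemLp r' 2 (volume : Measure ℝ)) :
    ‖r 0‖^2 ≤ (∫ x : ℝ, ‖r x‖ ^ 2) + ∫ x : ℝ, ‖r' x‖ ^ 2 := by
  have hrI : Integrable (fun x => ‖r x‖^2) :=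
    (memLp_two_iff_integrable_sq_norm hr2.aestronglyMeasurable).mp hr2
  have hr'I : Integrable (fun x => ‖r' x‖^2) :=
    (memLp_two_iff_integrable_sq_norm hr'2.aestronglyMeasurable).mp hr'2
  have hbound : Integrable (fun x => ‖r x‖^2 + ‖r' x‖^2) := hrI.add hr'I
  set F : ℝ → ℝ := fun x => ‖r x‖^2 with hF
  set F' : ℝ → ℝ := fun x => 2*((r x).re*(r' x).re) + 2*((r x).im*(r' x).im) with hF'
  have hrc : Continuous r := by
    rw [continuous_iff_continuousAt]; exact fun x => (hd x).continuousAt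
  have hFd : ∀ x, HasDerivAt F (F' x) x := by
    intro x
    have hre : HasDerivAt (fun y => (r y).re) ((r' x).re) x :=
      Complex.reCLM.hasFDerivAt.comp_hasDerivAt x (hd x)
    have him : HasDerivAt (fun y => (r y).im) ((r' x).im) x :=
      Complex.imCLM.hasFDerivAt.comp_hasDerivAt x (hd x)
    have h := (hre.mul hre).add (him.mul him)
    have heq : F = fun y => (r y).re*(r y).re + (r y).im*(r y).im := by
      funext y; exact normsq_eq (r y)
    rw [heq]
    refine h.congr_deriv ?_
    show _ = 2*((r x).re*(r' x).re) + 2*((r x).im*(r' x).im); ring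
  have hF'bound : ∀ x, |F' x| ≤ ‖r x‖^2 + ‖r' x‖^2 := by
    intro x
    have hFx : F' x = 2*((r x).re*(r' x).re) + 2*((r x).im*(r' x).im) := rfl
    rw [hFx, normsq_eq, normsq_eq, abs_le]
    constructor <;>
      nlinarith [sq_nonneg ((r x).re - (r' x).re), sq_nonneg ((r x).re + (r' x).re),
        sq_nonneg ((r x).im - (r' x).im), sq_nonneg ((r x).im + (r' x).im)]
  have hF'meas : AEStronglyMeasurable F' volume := by
    apply AEStronglyMeasurable.add
    · exact ((Complex.continuous_re.comp hrc).aestronglyMeasurable.mul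
        (Complex.continuous_re.comp_aestronglyMeasurable hr'2.aestronglyMeasurable)).const_mul 2
    · exact ((Complex.continuous_im.comp hrc).aestronglyMeasurable.mul
        (Complex.continuous_im.comp_aestronglyMeasurable hr'2.aestronglyMeasurable)).const_mul 2
  have hF'int : Integrable F' := by
    refine hbound.mono' hF'meas (ae_of_all _ fun x => ?_)
    rw [Real.norm_eq_abs]
    exact hF'bound x
  -- A := ∫ |F'|
  set A : ℝ := ∫ x, |F' x| with hA
  have hAM : A ≤ (∫ x : ℝ, ‖r x‖ ^ 2) + ∫ x : ℝ, ‖r' x‖ ^ 2 := by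
    rw [← integral_add hrI hr'I]
    exact integral_mono hF'int.abs hbound hF'bound
  refine le_trans ?_ hAM
  -- key : ∀ s ≥ 0, F 0 ≤ F s + A
  have key : ∀ s : ℝ, 0 ≤ s → F 0 ≤ F s + A := by
    intro s hs
    have hftc : ∫ t in (0:ℝ)..s, F' t = F s - F 0 :=
      intervalIntegral.integral_eq_sub_of_hasDerivAt (fun t _ => hFd t)
        hF'int.intervalIntegrable
    have h1 : ‖∫ t in (0:ℝ)..s, F' t‖ ≤ ∫ t in (0:ℝ)..s, ‖F' t‖ :=
      intervalIntegral.norm_integral_le_integral_norm hs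
    have h2 : ∫ t in (0:ℝ)..s, ‖F' t‖ ≤ A := by
      rw [intervalIntegral.integral_of_le hs, hA]
      simp only [Real.norm_eq_abs]
      exact setIntegral_le_integral hF'int.abs (ae_of_all _ fun x => abs_nonneg _)
    rw [hftc, Real.norm_eq_abs] at h1
    have := neg_le_abs (F s - F 0)
    linarith
  by_contra hlt
  push_neg at hlt
  set ε : ℝ := F 0 - A with hε
  have hF0 : F 0 = ‖r 0‖^2 := rfl
  have hεpos : 0 < ε := by simp only [hε, hF0]; linarith
  have hlow : ∀ s : ℝ, 0 ≤ s → ε ≤ F s := fun s hs => by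
    have := key s hs; simp only [hε]; linarith
  have hbd : ∀ n : ℕ, (n : ℝ) * ε ≤ ∫ x, F x := by
    intro n
    have h1 : ∫ x in Set.Icc (0:ℝ) n, ε ≤ ∫ x in Set.Icc (0:ℝ) n, F x := by
      apply setIntegral_mono_on (integrableOn_const (by
        rw [Real.volume_Icc]; exact ENNReal.ofReal_ne_top)) hrI.integrableOn
        measurableSet_Icc
      exact fun x hx => hlow x hx.1
    have h2 : ∫ x in Set.Icc (0:ℝ) n, ε = (n:ℝ) * ε := by
      rw [setIntegral_const, Real.volume_real_Icc_of_le
        (Nat.cast_nonneg n), smul_eq_mul]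
      ring
    have h3 : ∫ x in Set.Icc (0:ℝ) n, F x ≤ ∫ x, F x :=
      setIntegral_le_integral hrI (ae_of_all _ fun x => sq_nonneg _)
    linarith
  obtain ⟨n, hn⟩ := exists_nat_gt ((∫ x, F x) / ε)
  have := hbd n
  rw [div_lt_iff₀ hεpos] at hn
  linarith

lemma pointwise_bound {a b ρ : ℝ} (ha0 : 0 ≤ a) (hb0 : 0 ≤ b) (ha : a ≤ ρ)
    (hb : b ≤ ρ) (hρ : ρ < 1) :
    (Real.sqrt ((1-a)/(1-b)) - 1)^2 ≤ (a+b)/(1-ρ) := by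
  have hb1 : 0 < 1 - b := by linarith
  have hρ1 : 0 < 1 - ρ := by linarith
  have hq : 0 ≤ (1-a)/(1-b) := div_nonneg (by linarith) hb1.le
  set g := Real.sqrt ((1-a)/(1-b)) with hg
  have hgnn : 0 ≤ g := Real.sqrt_nonneg _
  have hg2 : g^2 = (1-a)/(1-b) := Real.sq_sqrt hq
  have h1 : (g-1)^2 ≤ |g^2 - 1| := by
    have habs : |g - 1| ≤ g + 1 := abs_le.mpr ⟨by linarith, by linarith⟩
    calc (g-1)^2 = |g-1| * |g-1| := by rw [← abs_mul, ← sq, abs_of_nonneg (sq_nonneg _)]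
    _ ≤ |g-1| * (g+1) := mul_le_mul_of_nonneg_left habs (abs_nonneg _)
    _ = |(g-1)*(g+1)| := by rw [abs_mul, abs_of_nonneg (by linarith : (0:ℝ) ≤ g+1)]
    _ = |g^2 - 1| := by congr 1; ring
  have h2 : |g^2 - 1| ≤ (a+b)/(1-ρ) := by
    rw [hg2]
    have heq : (1-a)/(1-b) - 1 = (b-a)/(1-b) := by field_simp; ring
    rw [heq, abs_div, abs_of_pos hb1]
    exact div_le_div₀ (by linarith) (abs_le.mpr ⟨by linarith, by linarith⟩) hρ1 (by linarith)
  linarith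

/-- Let `g(z) = ((1−|r^#(z)|²)/(1−|r(z)|²))^{1/2}` for `z < 0`, where `r ∈ H¹(ℝ)`,
`‖r‖_{H¹} ≤ λ`, `‖r‖_∞ ≤ ρ < 1`, and `r^#(z) = r(0)/(1+iz)`.  Then
`‖g − 1‖_{L²((−∞,0])} ≤ cλ/√(1−ρ)` for an absolute constant `c`. -/
theorem stmt_15 : ∃ c : ℝ, 0 < c ∧
    ∀ (r r' : ℝ → ℂ) (lam ρ : ℝ),
      (∀ x : ℝ, HasDerivAt r (r' x) x) →
      MemLp r 2 (volume : Measure ℝ) →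
      MemLp r' 2 (volume : Measure ℝ) →
      Real.sqrt ((∫ x : ℝ, ‖r x‖ ^ 2) + ∫ x : ℝ, ‖r' x‖ ^ 2) ≤ lam →
      (∀ x : ℝ, ‖r x‖ ≤ ρ) → ρ < 1 →
      Real.sqrt (∫ z in Set.Iio (0 : ℝ),
          (Real.sqrt ((1 - ‖r 0 / (1 + Complex.I * z)‖ ^ 2) / (1 - ‖r z‖ ^ 2)) - 1) ^ 2) ≤
        c * lam / Real.sqrt (1 - ρ) := by
  refine ⟨3, by norm_num, ?_⟩
  intro r r' lam ρ hd hr2 hr'2 hlam hρ hρ1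
  have hρ0 : 0 ≤ ρ := (norm_nonneg _).trans (hρ 0)
  have h1ρ : 0 < 1 - ρ := by linarith
  have hlam0 : 0 ≤ lam := (Real.sqrt_nonneg _).trans hlam
  have hM0 : 0 ≤ (∫ x : ℝ, ‖r x‖ ^ 2) + ∫ x : ℝ, ‖r' x‖ ^ 2 :=
    add_nonneg (integral_nonneg fun x => sq_nonneg _) (integral_nonneg fun x => sq_nonneg _)
  have hMlam : (∫ x : ℝ, ‖r x‖ ^ 2) + (∫ x : ℝ, ‖r' x‖ ^ 2) ≤ lam^2 := by
    have := pow_le_pow_left₀ (Real.sqrt_nonneg _) hlam 2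
    rwa [Real.sq_sqrt hM0] at this
  have hr0 : ‖r 0‖^2 ≤ lam^2 := (sobolev_zero r r' hd hr2 hr'2).trans hMlam
  -- a and b
  have haz : ∀ z : ℝ, ‖r 0 / (1 + Complex.I * z)‖^2 = ‖r 0‖^2 * ((1:ℝ)+z^2)⁻¹ := by
    intro z
    have hden : ‖(1:ℂ) + Complex.I * z‖^2 = 1 + z^2 := by
      rw [normsq_eq]
      simp [Complex.add_re, Complex.add_im, Complex.mul_re, Complex.mul_im]
      ring
    rw [norm_div, div_pow, hden, div_eq_mul_inv]
  have hz1 : ∀ z : ℝ, (0:ℝ) < 1 + z^2 := fun z => by positivity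
  have ha0 : ∀ z : ℝ, (0:ℝ) ≤ ‖r 0 / (1 + Complex.I * z)‖^2 := fun z => sq_nonneg _
  have haρ : ∀ z : ℝ, ‖r 0 / (1 + Complex.I * z)‖^2 ≤ ρ := by
    intro z
    rw [haz z]
    have h1 : ((1:ℝ)+z^2)⁻¹ ≤ 1 := by
      exact inv_le_one_of_one_le₀ (by nlinarith [sq_nonneg z])
    calc ‖r 0‖^2 * ((1:ℝ)+z^2)⁻¹ ≤ ‖r 0‖^2 * 1 :=
          mul_le_mul_of_nonneg_left h1 (sq_nonneg _)
    _ = ‖r 0‖^2 := mul_one _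
    _ ≤ ρ := by nlinarith [hρ 0, norm_nonneg (r 0)]
  have hbρ : ∀ z : ℝ, ‖r z‖^2 ≤ ρ := fun z => by nlinarith [hρ z, norm_nonneg (r z)]
  have haint : Integrable (fun z : ℝ => ‖r 0 / (1 + Complex.I * z)‖^2) := by
    have : (fun z : ℝ => ‖r 0 / (1 + Complex.I * z)‖^2)
        = fun z : ℝ => ‖r 0‖^2 * ((1:ℝ)+z^2)⁻¹ := funext haz
    rw [this]
    exact integrable_inv_one_add_sq.const_mul _
  have hbint : Integrable (fun z : ℝ => ‖r z‖^2) :=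
    (memLp_two_iff_integrable_sq_norm hr2.aestronglyMeasurable).mp hr2
  -- integral bound
  have step1 : (∫ z in Set.Iio (0 : ℝ),
      (Real.sqrt ((1 - ‖r 0 / (1 + Complex.I * z)‖ ^ 2) / (1 - ‖r z‖ ^ 2)) - 1) ^ 2)
      ≤ ∫ z in Set.Iio (0 : ℝ), (‖r 0 / (1 + Complex.I * z)‖^2 + ‖r z‖^2)/(1-ρ) := by
    refine integral_mono_of_nonneg (ae_of_all _ fun z => sq_nonneg _)
      (((haint.add hbint).div_const _).integrableOn) (ae_of_all _ fun z => ?_)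
    exact pointwise_bound (ha0 z) (sq_nonneg _) (haρ z) (hbρ z) hρ1
  have step2 : ∫ z in Set.Iio (0 : ℝ), (‖r 0 / (1 + Complex.I * z)‖^2 + ‖r z‖^2)/(1-ρ)
      = ((∫ z in Set.Iio (0 : ℝ), ‖r 0 / (1 + Complex.I * z)‖^2)
        + ∫ z in Set.Iio (0 : ℝ), ‖r z‖^2)/(1-ρ) := by
    rw [integral_div, integral_add haint.integrableOn hbint.integrableOn]
  have step3 : (∫ z in Set.Iio (0 : ℝ), ‖r 0 / (1 + Complex.I * z)‖^2) ≤ Real.pi * lam^2 := by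
    have h1 : (∫ z in Set.Iio (0 : ℝ), ‖r 0 / (1 + Complex.I * z)‖^2)
        ≤ ∫ z : ℝ, ‖r 0 / (1 + Complex.I * z)‖^2 :=
      setIntegral_le_integral haint (ae_of_all _ fun z => sq_nonneg _)
    have h2 : (∫ z : ℝ, ‖r 0 / (1 + Complex.I * z)‖^2) = ‖r 0‖^2 * Real.pi := by
      rw [funext haz, MeasureTheory.integral_const_mul, integral_univ_inv_one_add_sq]
    rw [h2] at h1
    refine h1.trans ?_
    nlinarith [Real.pi_pos]
  have step4 : (∫ z in Set.Iio (0 : ℝ), ‖r z‖^2) ≤ lam^2 := by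
    have h1 : (∫ z in Set.Iio (0 : ℝ), ‖r z‖^2) ≤ ∫ z : ℝ, ‖r z‖^2 :=
      setIntegral_le_integral hbint (ae_of_all _ fun z => sq_nonneg _)
    have h2 : (0:ℝ) ≤ ∫ x : ℝ, ‖r' x‖ ^ 2 := integral_nonneg fun x => sq_nonneg _
    linarith
  have hrhs : (3 * lam / Real.sqrt (1-ρ))^2 = 9 * lam^2 / (1-ρ) := by
    rw [div_pow, Real.sq_sqrt h1ρ.le]; ring
  have hfinal : (∫ z in Set.Iio (0 : ℝ),
      (Real.sqrt ((1 - ‖r 0 / (1 + Complex.I * z)‖ ^ 2) / (1 - ‖r z‖ ^ 2)) - 1) ^ 2)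
      ≤ (3 * lam / Real.sqrt (1-ρ))^2 := by
    rw [hrhs]
    refine (step1.trans_eq step2).trans ?_
    apply div_le_div₀ (by positivity) ?_ h1ρ le_rfl
    nlinarith [Real.pi_le_four, sq_nonneg lam]
  calc Real.sqrt (∫ z in Set.Iio (0 : ℝ),
      (Real.sqrt ((1 - ‖r 0 / (1 + Complex.I * z)‖ ^ 2) / (1 - ‖r z‖ ^ 2)) - 1) ^ 2)
      ≤ Real.sqrt ((3 * lam / Real.sqrt (1-ρ))^2) := Real.sqrt_le_sqrt hfinal
  _ = 3 * lam / Real.sqrt (1-ρ) := Real.sqrt_sq (by positivity)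
end
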